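/- (Main ISS theorem) Let y_t = x_tᵀθ° + v_t, let ψ, ψ₀ be continuous, positive-definite, symmetric, satisfy the generalized triangle inequality and generalized homogeneity, and suppose {x_t} is persistently exciting with respect to ψ for a norm ‖·‖. Then there exists a class-K∞ function ξ such that every sequence of minimizers θ̂_t ∈ argmin_θ V_t(θ) satisfies ‖θ̂_t − θ°‖ ≤ ξ⁻¹( 2λ^t ψ₀(θ̂₀ − θ°) + 2 Σ_{k=1}^t λ^{t−k} ψ(v_k) ) for all t ∈ ℕ. -/

import Mathlib

open Finset Filter

/-- A class-K∞ function: continuous on [0,∞), zero at zero, strictly increasing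
on [0,∞), and tending to ∞ at ∞. -/
def ClassKInf (f : ℝ → ℝ) : Prop :=
  ContinuousOn f (Set.Ici 0) ∧ f 0 = 0 ∧ StrictMonoOn f (Set.Ici 0) ∧
    Tendsto f atTop atTop

/-- Dot product on ℝⁿ. -/
def dot {n : ℕ} (x θ : Fin n → ℝ) : ℝ := ∑ i, x i * θ i

/-- `N` is a norm on ℝⁿ. -/
def IsNorm {n : ℕ} (N : (Fin n → ℝ) → ℝ) : Prop :=
  (∀ x, 0 ≤ N x) ∧ (∀ x, N x = 0 ↔ x = 0) ∧
    (∀ (a : ℝ) (x), N (a • x) = |a| * N x) ∧ (∀ x y, N (x + y) ≤ N x + N y)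

lemma isNorm_zero {n : ℕ} {N : (Fin n → ℝ) → ℝ} (hN : IsNorm N) : N 0 = 0 :=
  (hN.2.1 0).mpr rfl

lemma isNorm_sum_le {n : ℕ} {N : (Fin n → ℝ) → ℝ} (hN : IsNorm N)
    {ι : Type*} (s : Finset ι) (f : ι → Fin n → ℝ) :
    N (∑ i ∈ s, f i) ≤ ∑ i ∈ s, N (f i) := by
  classical
  induction s using Finset.induction_on with
  | empty => simp [isNorm_zero hN]
  | insert _ _ h ih =>
    rw [Finset.sum_insert h, Finset.sum_insert h]
    exact le_trans (hN.2.2.2 _ _) (by linarith)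

lemma isNorm_continuous {n : ℕ} {N : (Fin n → ℝ) → ℝ} (hN : IsNorm N) :
    Continuous N := by
  obtain ⟨hnn, hzero, hhom, htri⟩ := hN
  have hneg : ∀ z, N (-z) = N z := by
    intro z
    have := hhom (-1) z
    simpa using this
  have hsub : ∀ a b, |N a - N b| ≤ N (a - b) := by
    intro a b
    rw [abs_sub_le_iff]
    constructor
    · have := htri b (a - b)
      simp only [add_sub_cancel] at this
      linarith
    · have := htri a (b - a)
      have h2 : N (b - a) = N (a - b) := by
        rw [show b - a = -(a-b) by ring, hneg]
      simp only [add_sub_cancel] at this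
      linarith
  have hb : ∀ z : Fin n → ℝ,
      N z ≤ ∑ i, |z i| * N (fun j => if i = j then (1:ℝ) else 0) := by
    intro z
    calc N z = N (∑ i, z i • fun j => if i = j then (1:ℝ) else 0) := by
          rw [← pi_eq_sum_univ]
      _ ≤ ∑ i, N (z i • fun j => if i = j then (1:ℝ) else 0) :=
          isNorm_sum_le ⟨hnn, hzero, hhom, htri⟩ _ _
      _ = ∑ i, |z i| * N (fun j => if i = j then (1:ℝ) else 0) := by
          simp [hhom]
  set C : ℝ := ∑ i, N (fun j => if i = j then (1:ℝ) else 0) with hC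
  have hC0 : 0 ≤ C := Finset.sum_nonneg fun i _ => hnn _
  have : LipschitzWith C.toNNReal N := by
    apply LipschitzWith.of_dist_le_mul
    intro a b
    rw [Real.dist_eq, Real.coe_toNNReal _ hC0]
    refine le_trans (hsub a b) (le_trans (hb (a - b)) ?_)
    calc ∑ i, |(a - b) i| * N (fun j => if i = j then (1:ℝ) else 0)
        ≤ ∑ i, dist a b * N (fun j => if i = j then (1:ℝ) else 0) := by
          refine Finset.sum_le_sum fun i _ => mul_le_mul_of_nonneg_right ?_ (hnn _)
          have := dist_le_pi_dist a b i
          rwa [Real.dist_eq] at this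
      _ = C * dist a b := by rw [← Finset.mul_sum, hC, mul_comm]
  exact this.continuous

lemma isNorm_lower {n : ℕ} (hn : 0 < n) {N : (Fin n → ℝ) → ℝ} (hN : IsNorm N) :
    ∃ c > 0, ∀ x, c * ‖x‖ ≤ N x := by
  haveI : Nonempty (Fin n) := ⟨⟨0, hn⟩⟩
  have hcomp : IsCompact (Metric.sphere (0 : Fin n → ℝ) 1) := isCompact_sphere _ _
  have hne : (Metric.sphere (0 : Fin n → ℝ) 1).Nonempty := by
    refine ⟨fun _ => 1, ?_⟩
    rw [mem_sphere_zero_iff_norm]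
    simp
  obtain ⟨u, hu, humin⟩ := hcomp.exists_isMinOn hne (isNorm_continuous hN).continuousOn
  have hu1 : ‖u‖ = 1 := mem_sphere_zero_iff_norm.mp hu
  have huc : 0 < N u := by
    rcases (hN.1 u).lt_or_eq with h | h
    · exact h
    · exfalso
      have : u = 0 := (hN.2.1 u).mp h.symm
      rw [this] at hu1; simp at hu1
  refine ⟨N u, huc, fun x => ?_⟩
  rcases eq_or_ne x 0 with rfl | hx
  · simp [isNorm_zero hN]
  · have hxn : ‖x‖ ≠ 0 := norm_ne_zero_iff.mpr hx
    have hxp : 0 < ‖x‖ := norm_pos_iff.mpr hx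
    set w : Fin n → ℝ := ‖x‖⁻¹ • x with hw
    have hwmem : w ∈ Metric.sphere (0 : Fin n → ℝ) 1 := by
      rw [mem_sphere_zero_iff_norm, hw, norm_smul, norm_inv, norm_norm,
        inv_mul_cancel₀ hxn]
    have hxw : x = ‖x‖ • w := by
      rw [hw, smul_smul, mul_inv_cancel₀ hxn, one_smul]
    have : N x = ‖x‖ * N w := by
      rw [hxw, hN.2.2.1, abs_of_pos hxp]
      rw [← hxw]
    rw [this, mul_comm]
    exact mul_le_mul_of_nonneg_left (humin hwmem) (norm_nonneg x)

lemma classK_nonneg {f : ℝ → ℝ} (hf : ClassKInf f) {s : ℝ} (hs : 0 ≤ s) : 0 ≤ f s := by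
  rw [← hf.2.1]
  exact hf.2.2.1.monotoneOn (Set.self_mem_Ici) hs hs

lemma classK_pos {f : ℝ → ℝ} (hf : ClassKInf f) {s : ℝ} (hs : 0 < s) : 0 < f s := by
  rw [← hf.2.1]
  exact hf.2.2.1 Set.self_mem_Ici hs.le hs

lemma psi0_lower {n : ℕ} (hn : 0 < n) {N : (Fin n → ℝ) → ℝ} (hN : IsNorm N)
    {ψ₀ : (Fin n → ℝ) → ℝ} {fψ₀ : ℝ → ℝ}
    (hψ₀c : Continuous ψ₀) (hψ₀nn : ∀ θ, 0 ≤ ψ₀ θ)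
    (hψ₀pd : ∀ θ, ψ₀ θ = 0 ↔ θ = 0)
    (hfψ₀ : ClassKInf fψ₀)
    (hψ₀GH : ∀ (θ : Fin n → ℝ) (r : ℝ), r ≠ 0 → fψ₀ (1 / |r|) * ψ₀ (r • θ) ≤ ψ₀ θ) :
    ∃ m > 0, ∀ θ, m * fψ₀ (N θ) ≤ ψ₀ θ := by
  obtain ⟨c, hc, hcl⟩ := isNorm_lower hn hN
  have hNc : Continuous N := isNorm_continuous hN
  set K : Set (Fin n → ℝ) := {θ | N θ = 1} with hK
  have hKclosed : IsClosed K := isClosed_eq hNc continuous_const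
  have hKbdd : Bornology.IsBounded K := by
    refine (Metric.isBounded_closedBall (x := (0 : Fin n → ℝ)) (r := c⁻¹)).subset ?_
    intro θ hθ
    rw [Metric.mem_closedBall, dist_zero_right]
    have h1 : c * ‖θ‖ ≤ 1 := by
      have := hcl θ
      have h2 : N θ = 1 := hθ
      linarith [this, h2.le]
    rw [← mul_le_mul_iff_right₀ hc, mul_inv_cancel₀ hc.ne']
    exact h1
  have hKcomp : IsCompact K := Metric.isCompact_of_isClosed_isBounded hKclosed hKbdd
  have hKne : K.Nonempty := by
    set x₀ : Fin n → ℝ := fun _ => 1 with hx₀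
    have hx₀ne : x₀ ≠ 0 := by
      intro h
      have := congrFun h ⟨0, hn⟩
      simp [hx₀] at this
    have hNx₀ : 0 < N x₀ := by
      rcases (hN.1 x₀).lt_or_eq with h | h
      · exact h
      · exact absurd ((hN.2.1 x₀).mp h.symm) hx₀ne
    refine ⟨(N x₀)⁻¹ • x₀, ?_⟩
    show N ((N x₀)⁻¹ • x₀) = 1
    rw [hN.2.2.1, abs_of_pos (inv_pos.mpr hNx₀), inv_mul_cancel₀ hNx₀.ne']
  obtain ⟨u, hu, humin⟩ := hKcomp.exists_isMinOn hKne hψ₀c.continuousOn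
  have hu1 : N u = 1 := hu
  have hune : u ≠ 0 := by
    intro h
    rw [h, isNorm_zero hN] at hu1
    norm_num at hu1
  have hm : 0 < ψ₀ u := by
    rcases (hψ₀nn u).lt_or_eq with h | h
    · exact h
    · exact absurd ((hψ₀pd u).mp h.symm) hune
  refine ⟨ψ₀ u, hm, fun θ => ?_⟩
  rcases eq_or_ne θ 0 with rfl | hθ
  · rw [isNorm_zero hN, hfψ₀.2.1, mul_zero]
    exact hψ₀nn 0
  · have hs : 0 < N θ := by
      rcases (hN.1 θ).lt_or_eq with h | h
      · exact h
      · exact absurd ((hN.2.1 θ).mp h.symm) hθ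
    have hGH := hψ₀GH θ (N θ)⁻¹ (by positivity)
    have habs : 1 / |(N θ)⁻¹| = N θ := by
      rw [abs_of_pos (inv_pos.mpr hs), one_div, inv_inv]
    rw [habs] at hGH
    have hmem : (N θ)⁻¹ • θ ∈ K := by
      show N ((N θ)⁻¹ • θ) = 1
      rw [hN.2.2.1, abs_of_pos (inv_pos.mpr hs), inv_mul_cancel₀ hs.ne']
    have h1 : ψ₀ u ≤ ψ₀ ((N θ)⁻¹ • θ) := humin hmem
    have h2 : 0 ≤ fψ₀ (N θ) := classK_nonneg hfψ₀ hs.le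
    calc ψ₀ u * fψ₀ (N θ) ≤ ψ₀ ((N θ)⁻¹ • θ) * fψ₀ (N θ) :=
          mul_le_mul_of_nonneg_right h1 h2
      _ = fψ₀ (N θ) * ψ₀ ((N θ)⁻¹ • θ) := mul_comm _ _
      _ ≤ ψ₀ θ := hGH

lemma build_xi (a g : ℝ → ℝ) (ha : ClassKInf a) (hg : ClassKInf g)
    (c0 : ℝ) (hc0 : 0 < c0) :
    ∃ ξ ξinv : ℝ → ℝ, ClassKInf ξ ∧ ClassKInf ξinv ∧
      (∀ s : ℝ, 0 ≤ s → ξ (ξinv s) = s ∧ ξinv (ξ s) = s) ∧ Monotone ξinv ∧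
      (∀ s : ℝ, 0 ≤ s → ξ s = c0 * min (a s) (g s)) := by
  classical
  set ξ₀ : ℝ → ℝ := fun s => c0 * min (a (max s 0)) (g (max s 0)) with hξ₀
  set ξ : ℝ → ℝ := fun s => if s ≤ 0 then s else ξ₀ s with hξdef
  have hξ₀0 : ξ₀ 0 = 0 := by simp [hξ₀, ha.2.1, hg.2.1]
  have hξeq : ∀ s : ℝ, 0 ≤ s → ξ s = c0 * min (a s) (g s) := by
    intro s hs
    rcases hs.lt_or_eq with h | h
    · rw [hξdef]
      simp only [if_neg (not_le.mpr h), hξ₀, max_eq_left hs]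
    · rw [← h]
      simp [hξdef, hξ₀, ha.2.1, hg.2.1]
  have hξ0 : ξ 0 = 0 := by simp [hξdef]
  have hξ₀pos : ∀ s : ℝ, 0 < s → 0 < ξ₀ s := by
    intro s hs
    have h1 : 0 < a (max s 0) := classK_pos ha (by simp [hs])
    have h2 : 0 < g (max s 0) := classK_pos hg (by simp [hs])
    exact mul_pos hc0 (lt_min h1 h2)
  have hξ₀mono : ∀ p q : ℝ, 0 < p → p < q → ξ₀ p < ξ₀ q := by
    intro p q hp hpq
    have hq : 0 < q := hp.trans hpq
    rw [hξ₀]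
    simp only [max_eq_left hp.le, max_eq_left hq.le]
    refine mul_lt_mul_of_pos_left ?_ hc0
    have h1 : a p < a q := ha.2.2.1 (Set.mem_Ici.mpr hp.le) (Set.mem_Ici.mpr hq.le) hpq
    have h2 : g p < g q := hg.2.2.1 (Set.mem_Ici.mpr hp.le) (Set.mem_Ici.mpr hq.le) hpq
    exact lt_min (lt_of_le_of_lt (min_le_left _ _) h1) (lt_of_le_of_lt (min_le_right _ _) h2)
  have hsm : StrictMono ξ := by
    intro p q hpq
    rcases le_or_gt q 0 with hq | hq
    · rw [hξdef]; simp only [if_pos (hpq.le.trans hq), if_pos hq]; exact hpq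
    · rcases le_or_gt p 0 with hp | hp
      · rw [hξdef]
        simp only [if_pos hp, if_neg (not_le.mpr hq)]
        exact lt_of_le_of_lt hp (hξ₀pos q hq)
      · rw [hξdef]
        simp only [if_neg (not_le.mpr hp), if_neg (not_le.mpr hq)]
        exact hξ₀mono p q hp hpq
  have hξ₀cont : Continuous ξ₀ := by
    have hmax : Continuous (fun s : ℝ => max s 0) := continuous_id.max continuous_const
    have hmem : ∀ s : ℝ, max s 0 ∈ Set.Ici (0:ℝ) := fun s => le_max_right s 0
    have h1 : Continuous (fun s : ℝ => a (max s 0)) := ha.1.comp_continuous hmax hmem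
    have h2 : Continuous (fun s : ℝ => g (max s 0)) := hg.1.comp_continuous hmax hmem
    exact continuous_const.mul (h1.min h2)
  have hξcont : Continuous ξ := by
    refine Continuous.if_le continuous_id hξ₀cont continuous_id continuous_const ?_
    intro s hs
    rw [hs]
    exact hξ₀0.symm
  have hξtop : Tendsto ξ atTop atTop := by
    have hmaxtop : Tendsto (fun s : ℝ => max s 0) atTop atTop :=
      tendsto_atTop_mono (fun s => le_max_left s 0) tendsto_id
    have h1 : Tendsto (fun s : ℝ => a (max s 0)) atTop atTop := ha.2.2.2.comp hmaxtop
    have h2 : Tendsto (fun s : ℝ => g (max s 0)) atTop atTop := hg.2.2.2.comp hmaxtop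
    have hmin : Tendsto (fun s : ℝ => min (a (max s 0)) (g (max s 0))) atTop atTop := by
      rw [tendsto_atTop]
      intro b
      filter_upwards [tendsto_atTop.mp h1 b, tendsto_atTop.mp h2 b] with s hs1 hs2
      exact le_min hs1 hs2
    have h3 : Tendsto ξ₀ atTop atTop := Tendsto.const_mul_atTop hc0 hmin
    refine h3.congr' ?_
    filter_upwards [eventually_gt_atTop (0:ℝ)] with s hs
    rw [hξdef]
    simp [not_le.mpr hs]
  have hξbot : Tendsto ξ atBot atBot := by
    refine tendsto_id.congr' ?_
    filter_upwards [eventually_le_atBot (0:ℝ)] with s hs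
    rw [hξdef]
    simp [hs]
  have hsurj : Function.Surjective ξ := hξcont.surjective hξtop hξbot
  set e : ℝ ≃o ℝ := StrictMono.orderIsoOfSurjective ξ hsm hsurj with he
  have heapp : ∀ s, e s = ξ s := fun s => rfl
  refine ⟨ξ, ⇑e.symm, ⟨hξcont.continuousOn, hξ0, hsm.strictMonoOn _, hξtop⟩, ?_, ?_, e.symm.monotone, hξeq⟩
  · refine ⟨e.symm.continuous.continuousOn, ?_, e.symm.strictMono.strictMonoOn _, ?_⟩
    · have h0 : e 0 = 0 := (heapp 0).trans hξ0
      calc e.symm 0 = e.symm (e 0) := by rw [h0]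
        _ = 0 := e.symm_apply_apply 0
    · rw [tendsto_atTop_atTop]
      intro b
      refine ⟨e b, fun s hs => ?_⟩
      have := e.symm.monotone hs
      rwa [e.symm_apply_apply] at this
  · intro s _
    constructor
    · rw [← heapp, e.apply_symm_apply]
    · rw [← heapp, e.symm_apply_apply]

/-- Main ISS theorem: there is a class-K∞ function ξ (with inverse
ξ⁻¹, also class-K∞) such that every sequence of minimizers satisfies
‖θ̂_t − θ°‖ ≤ ξ⁻¹(2λ^t ψ₀(θ̂₀−θ°) + 2 Σ_{k=1}^t λ^{t−k} ψ(v_k)). -/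
theorem stmt_12 {n : ℕ} (ψ : ℝ → ℝ) (ψ₀ : (Fin n → ℝ) → ℝ) (fψ fψ₀ : ℝ → ℝ)
    (hψc : Continuous ψ) (hψnn : ∀ e, 0 ≤ ψ e)
    (hψpd : ∀ e, ψ e = 0 ↔ e = 0) (hψsym : ∀ e, ψ (-e) = ψ e)
    (αψ : ℝ) (hαψ : 0 < αψ) (hψGTI : ∀ e e' : ℝ, αψ * ψ e - ψ e' ≤ ψ (e - e'))
    (hfψ : ClassKInf fψ)
    (hψGH : ∀ (e r : ℝ), r ≠ 0 → fψ (1 / |r|) * ψ (r * e) ≤ ψ e)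
    (hψ₀c : Continuous ψ₀) (hψ₀nn : ∀ θ, 0 ≤ ψ₀ θ)
    (hψ₀pd : ∀ θ, ψ₀ θ = 0 ↔ θ = 0) (hψ₀sym : ∀ θ, ψ₀ (-θ) = ψ₀ θ)
    (αψ₀ : ℝ) (hαψ₀ : 0 < αψ₀)
    (hψ₀GTI : ∀ θ θ' : Fin n → ℝ, αψ₀ * ψ₀ θ - ψ₀ θ' ≤ ψ₀ (θ - θ'))
    (hfψ₀ : ClassKInf fψ₀)
    (hψ₀GH : ∀ (θ : Fin n → ℝ) (r : ℝ), r ≠ 0 → fψ₀ (1 / |r|) * ψ₀ (r • θ) ≤ ψ₀ θ)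
    (x : ℕ → Fin n → ℝ) (y v : ℕ → ℝ) (θc θ₀ : Fin n → ℝ)
    (hy : ∀ k : ℕ, y k = dot (x k) θc + v k)
    (N : (Fin n → ℝ) → ℝ) (hN : IsNorm N)
    (l : ℝ) (hl : l ∈ Set.Ioo (0 : ℝ) 1)
    (T : ℕ) (hT : 0 < T) (α β : ℝ → ℝ) (hα : ClassKInf α) (hβ : ClassKInf β)
    (hPE : ∀ (t : ℕ) (θ : Fin n → ℝ),
      α (N θ) ≤ ∑ k ∈ Finset.Icc (t + 1) (t + T), ψ (dot (x k) θ) ∧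
      ∑ k ∈ Finset.Icc (t + 1) (t + T), ψ (dot (x k) θ) ≤ β (N θ))
    (V : ℕ → (Fin n → ℝ) → ℝ)
    (hV : ∀ (t : ℕ) (θ : Fin n → ℝ),
      V t θ = ∑ k ∈ Finset.Icc 1 t, l ^ (t - k) * ψ (y k - dot (x k) θ) +
        l ^ t * ψ₀ (θ - θ₀)) :
    ∃ ξ ξinv : ℝ → ℝ, ClassKInf ξ ∧ ClassKInf ξinv ∧
      (∀ s : ℝ, 0 ≤ s → ξ (ξinv s) = s ∧ ξinv (ξ s) = s) ∧
      ∀ θhat : ℕ → Fin n → ℝ,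
        (∀ (t : ℕ) (θ : Fin n → ℝ), V t (θhat t) ≤ V t θ) →
        ∀ t : ℕ, N (θhat t - θc) ≤
          ξinv (2 * l ^ t * ψ₀ (θ₀ - θc) +
            2 * ∑ k ∈ Finset.Icc 1 t, l ^ (t - k) * ψ (v k)) := by
  classical
  obtain ⟨hl0, hl1⟩ := hl
  have hRnn : ∀ t : ℕ, 0 ≤ 2 * l ^ t * ψ₀ (θ₀ - θc) +
      2 * ∑ k ∈ Finset.Icc 1 t, l ^ (t - k) * ψ (v k) := by
    intro t
    have h1 : 0 ≤ 2 * l ^ t * ψ₀ (θ₀ - θc) :=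
      mul_nonneg (by positivity) (hψ₀nn _)
    have h2 : 0 ≤ ∑ k ∈ Finset.Icc 1 t, l ^ (t - k) * ψ (v k) :=
      Finset.sum_nonneg fun k _ => mul_nonneg (pow_nonneg hl0.le _) (hψnn _)
    linarith
  rcases Nat.eq_zero_or_pos n with hn | hn
  · refine ⟨id, id, ⟨continuousOn_id, rfl, fun p _ q _ h => h, tendsto_id⟩,
      ⟨continuousOn_id, rfl, fun p _ q _ h => h, tendsto_id⟩,
      fun s _ => ⟨rfl, rfl⟩, ?_⟩
    intro θhat _ t
    have h0 : θhat t - θc = 0 := by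
      subst hn
      funext i
      exact i.elim0
    rw [h0, isNorm_zero hN]
    exact hRnn t
  · obtain ⟨m, hm, hml⟩ := psi0_lower hn hN hψ₀c hψ₀nn hψ₀pd hfψ₀ hψ₀GH
    set g : ℝ → ℝ := fun s => m * fψ₀ s with hgdef
    have hgK : ClassKInf g :=
      ⟨continuousOn_const.mul hfψ₀.1, by simp [hgdef, hfψ₀.2.1],
        fun p hp q hq hpq => mul_lt_mul_of_pos_left (hfψ₀.2.2.1 hp hq hpq) hm,
        Tendsto.const_mul_atTop hm hfψ₀.2.2.2⟩
    have hc0 : 0 < l ^ (T - 1) * min αψ αψ₀ :=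
      mul_pos (pow_pos hl0 _) (lt_min hαψ hαψ₀)
    obtain ⟨ξ, ξinv, hξK, hξinvK, hinv, hinvmono, hξeq⟩ :=
      build_xi α g hα hgK (l ^ (T - 1) * min αψ αψ₀) hc0
    refine ⟨ξ, ξinv, hξK, hξinvK, hinv, ?_⟩
    intro θhat hmin t
    set d : Fin n → ℝ := θhat t - θc with hd
    set Sv : ℝ := ∑ k ∈ Finset.Icc 1 t, l ^ (t - k) * ψ (v k) with hSv
    set S1 : ℝ := ∑ k ∈ Finset.Icc 1 t, l ^ (t - k) * ψ (dot (x k) d) with hS1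
    have hS1nn : 0 ≤ S1 :=
      Finset.sum_nonneg fun k _ => mul_nonneg (pow_nonneg hl0.le _) (hψnn _)
    have hNd : 0 ≤ N d := hN.1 d
    have hdot : ∀ k, dot (x k) (θhat t) - dot (x k) θc = dot (x k) d := by
      intro k
      rw [hd]
      simp [dot, Pi.sub_apply, mul_sub, Finset.sum_sub_distrib]
    have hVc : V t θc = Sv + l ^ t * ψ₀ (θ₀ - θc) := by
      rw [hV, hSv]
      congr 1
      · refine Finset.sum_congr rfl fun k _ => ?_
        rw [hy k, add_sub_cancel_left]
      · rw [← neg_sub θ₀ θc, hψ₀sym]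
    have hA : V t (θhat t) ≤ Sv + l ^ t * ψ₀ (θ₀ - θc) := by
      have := hmin t θc
      rwa [hVc] at this
    have hBk : ∀ k ∈ Finset.Icc 1 t,
        l ^ (t - k) * (αψ * ψ (dot (x k) d) - ψ (v k)) ≤
          l ^ (t - k) * ψ (y k - dot (x k) (θhat t)) := by
      intro k _
      refine mul_le_mul_of_nonneg_left ?_ (pow_nonneg hl0.le _)
      have harg : y k - dot (x k) (θhat t) = -(dot (x k) d - v k) := by
        rw [hy k, ← hdot k]
        ring
      rw [harg, hψsym]
      exact hψGTI _ _
    have hB1 : αψ * S1 - Sv + l ^ t * (αψ₀ * ψ₀ d - ψ₀ (θ₀ - θc)) ≤ V t (θhat t) := by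
      rw [hV]
      have hs : αψ * S1 - Sv =
          ∑ k ∈ Finset.Icc 1 t, l ^ (t - k) * (αψ * ψ (dot (x k) d) - ψ (v k)) := by
        rw [hS1, hSv, Finset.mul_sum, ← Finset.sum_sub_distrib]
        exact Finset.sum_congr rfl fun k _ => by ring
      rw [hs]
      refine add_le_add (Finset.sum_le_sum hBk)
        (mul_le_mul_of_nonneg_left ?_ (pow_nonneg hl0.le t))
      have harg : θhat t - θ₀ = d - (θ₀ - θc) := by
        rw [hd]
        abel
      rw [harg]
      exact hψ₀GTI d (θ₀ - θc)
    have hkey2 : αψ * S1 + αψ₀ * (l ^ t * ψ₀ d) ≤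
        2 * l ^ t * ψ₀ (θ₀ - θc) + 2 * Sv := by
      have h := le_trans hB1 hA
      have hexp : l ^ t * (αψ₀ * ψ₀ d - ψ₀ (θ₀ - θc)) =
          αψ₀ * (l ^ t * ψ₀ d) - l ^ t * ψ₀ (θ₀ - θc) := by ring
      have hexp2 : 2 * l ^ t * ψ₀ (θ₀ - θc) = 2 * (l ^ t * ψ₀ (θ₀ - θc)) := by ring
      linarith
    have hC : l ^ (T - 1) * min αψ αψ₀ * min (α (N d)) (g (N d)) ≤
        αψ * S1 + αψ₀ * (l ^ t * ψ₀ d) := by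
      have h7 : 0 ≤ min (α (N d)) (g (N d)) :=
        le_min (classK_nonneg hα hNd) (mul_nonneg hm.le (classK_nonneg hfψ₀ hNd))
      rcases lt_or_ge t T with htT | hTt
      · have h1 : l ^ (T - 1) ≤ l ^ t :=
          pow_le_pow_of_le_one hl0.le hl1.le (by omega)
        have h2 : g (N d) ≤ ψ₀ d := hml d
        have h4 : 0 ≤ g (N d) := mul_nonneg hm.le (classK_nonneg hfψ₀ hNd)
        calc l ^ (T - 1) * min αψ αψ₀ * min (α (N d)) (g (N d))
            ≤ l ^ (T - 1) * αψ₀ * g (N d) :=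
              mul_le_mul (mul_le_mul_of_nonneg_left (min_le_right _ _) (pow_nonneg hl0.le _))
                (min_le_right _ _) h7 (mul_nonneg (pow_nonneg hl0.le _) hαψ₀.le)
          _ ≤ l ^ t * αψ₀ * ψ₀ d :=
              mul_le_mul (mul_le_mul_of_nonneg_right h1 hαψ₀.le) h2 h4
                (mul_nonneg (pow_nonneg hl0.le t) hαψ₀.le)
          _ = αψ₀ * (l ^ t * ψ₀ d) := by ring
          _ ≤ αψ * S1 + αψ₀ * (l ^ t * ψ₀ d) := by nlinarith [mul_nonneg hαψ.le hS1nn]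
      · have hPEa := (hPE (t - T) d).1
        rw [Nat.sub_add_cancel hTt] at hPEa
        have h1 : ∀ k ∈ Finset.Icc (t - T + 1) t,
            l ^ (T - 1) * ψ (dot (x k) d) ≤ l ^ (t - k) * ψ (dot (x k) d) := by
          intro k hk
          rw [Finset.mem_Icc] at hk
          exact mul_le_mul_of_nonneg_right
            (pow_le_pow_of_le_one hl0.le hl1.le (by omega)) (hψnn _)
        have h2 : l ^ (T - 1) * ∑ k ∈ Finset.Icc (t - T + 1) t, ψ (dot (x k) d) ≤
            ∑ k ∈ Finset.Icc (t - T + 1) t, l ^ (t - k) * ψ (dot (x k) d) := by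
          rw [Finset.mul_sum]
          exact Finset.sum_le_sum h1
        have h3 : ∑ k ∈ Finset.Icc (t - T + 1) t, l ^ (t - k) * ψ (dot (x k) d) ≤ S1 := by
          rw [hS1]
          exact Finset.sum_le_sum_of_subset_of_nonneg
            (Finset.Icc_subset_Icc (by omega) le_rfl)
            fun k _ _ => mul_nonneg (pow_nonneg hl0.le _) (hψnn _)
        have h4 : l ^ (T - 1) * α (N d) ≤ S1 :=
          le_trans (mul_le_mul_of_nonneg_left hPEa (pow_nonneg hl0.le _)) (le_trans h2 h3)
        calc l ^ (T - 1) * min αψ αψ₀ * min (α (N d)) (g (N d))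
            ≤ l ^ (T - 1) * αψ * α (N d) :=
              mul_le_mul (mul_le_mul_of_nonneg_left (min_le_left _ _) (pow_nonneg hl0.le _))
                (min_le_left _ _) h7 (mul_nonneg (pow_nonneg hl0.le _) hαψ.le)
          _ = αψ * (l ^ (T - 1) * α (N d)) := by ring
          _ ≤ αψ * S1 := mul_le_mul_of_nonneg_left h4 hαψ.le
          _ ≤ αψ * S1 + αψ₀ * (l ^ t * ψ₀ d) := by
              nlinarith [mul_nonneg (mul_nonneg hαψ₀.le (pow_nonneg hl0.le t)) (hψ₀nn d)]
    have hfinal : ξ (N d) ≤ 2 * l ^ t * ψ₀ (θ₀ - θc) + 2 * Sv := by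
      rw [hξeq (N d) hNd]
      exact le_trans hC hkey2
    have hmono := hinvmono hfinal
    rwa [(hinv (N d) hNd).2] at hmono
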